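/- Let f: ℝ → ℝ be bounded, measurable and compactly supported. Then for every R > 0 one has the exact identity ∑_{n=0}^∞ E[f(ρ_n − R)] = 2·R·∫_{−R}^{+∞} f(x) dx + 2·∫_{−R}^{+∞} x·f(x) dx. In particular, ∑_{n=0}^∞ E[f(ρ_n − R)] = 2·R·∫_ℝ f(x) dx + O(1) as R → +∞. -/

import Mathlib

open MeasureTheory ProbabilityTheory Filter Real

private noncomputable def gd (n : ℕ) (r : ℝ) : ℝ :=
  Set.indicator (Set.Ici (0 : ℝ))
    (fun r => 2 * r ^ (2 * n + 1) * Real.exp (-r ^ 2) / (Nat.factorial n)) r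

private lemma gd_nonneg (n : ℕ) (r : ℝ) : 0 ≤ gd n r := by
  apply Set.indicator_nonneg
  intro x hx
  have : (0:ℝ) ≤ x := hx
  positivity

private lemma gd_eq (n : ℕ) (r : ℝ) :
    2 * r ^ (2 * n + 1) * Real.exp (-r ^ 2) / (Nat.factorial n)
      = (2 * r * Real.exp (-r ^ 2)) * ((r ^ 2) ^ n / (Nat.factorial n)) := by
  rw [pow_add, pow_mul, pow_one]; ring

private lemma gd_summable (r : ℝ) : Summable (fun n : ℕ => gd n r) := by
  unfold gd
  by_cases hr : r ∈ Set.Ici (0 : ℝ)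
  · simp only [Set.indicator_of_mem hr]
    have : (fun n : ℕ => 2 * r ^ (2 * n + 1) * Real.exp (-r ^ 2) / (Nat.factorial n))
        = fun n : ℕ => (2 * r * Real.exp (-r ^ 2)) * ((r ^ 2) ^ n / (Nat.factorial n)) := by
      funext n; exact gd_eq n r
    rw [this]
    exact (Real.summable_pow_div_factorial (r ^ 2)).mul_left _
  · simp only [Set.indicator_of_notMem hr]
    exact summable_zero

private lemma gd_tsum (r : ℝ) :
    (∑' n : ℕ, gd n r) = Set.indicator (Set.Ici (0 : ℝ)) (fun r => 2 * r) r := by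
  unfold gd
  by_cases hr : r ∈ Set.Ici (0 : ℝ)
  · simp only [Set.indicator_of_mem hr]
    have h1 : (fun n : ℕ => 2 * r ^ (2 * n + 1) * Real.exp (-r ^ 2) / (Nat.factorial n))
        = fun n : ℕ => (2 * r * Real.exp (-r ^ 2)) * ((r ^ 2) ^ n / (Nat.factorial n)) := by
      funext n; exact gd_eq n r
    rw [h1, tsum_mul_left]
    have h2 : (∑' n : ℕ, (r ^ 2) ^ n / (Nat.factorial n : ℝ)) = Real.exp (r ^ 2) := by
      rw [Real.exp_eq_exp_ℝ, NormedSpace.exp_eq_tsum_div]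
    rw [h2, mul_assoc, ← Real.exp_add]
    simp
  · simp only [Set.indicator_of_notMem hr, tsum_zero]

private lemma gd_measurable (n : ℕ) : Measurable (gd n) := by
  unfold gd
  apply Measurable.indicator _ measurableSet_Ici
  fun_prop

theorem stmt11
    {Ω : Type*} [MeasureSpace Ω] [IsProbabilityMeasure (ℙ : Measure Ω)]
    (ρ : ℕ → Ω → ℝ)
    (hρ_meas : ∀ n, Measurable (ρ n))
    (hρ_nonneg : ∀ n, ∀ ω, 0 ≤ ρ n ω)
    (hρ_indep : iIndepFun ρ ℙ)
    (hρ_law : ∀ n : ℕ, (ℙ : Measure Ω).map (ρ n) =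
      volume.withDensity (fun r => ENNReal.ofReal
        (Set.indicator (Set.Ici (0 : ℝ))
          (fun r => 2 * r ^ (2 * n + 1) * Real.exp (-r ^ 2) / (Nat.factorial n)) r)))
    (f : ℝ → ℝ) (hf_bdd : ∃ C, ∀ x, |f x| ≤ C)
    (hf_meas : Measurable f) (hf_supp : HasCompactSupport f) :
    (∀ R : ℝ, 0 < R →
      (∑' n : ℕ, ∫ ω, f (ρ n ω - R) ∂ℙ) =
        2 * R * (∫ x in Set.Ioi (-R), f x) + 2 * ∫ x in Set.Ioi (-R), x * f x) ∧
    (∃ C > (0 : ℝ), ∃ R₀ : ℝ, ∀ R : ℝ, R₀ ≤ R →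
      |(∑' n : ℕ, ∫ ω, f (ρ n ω - R) ∂ℙ) - 2 * R * ∫ x : ℝ, f x| ≤ C) := by
  obtain ⟨C, hC⟩ := hf_bdd
  have hC0 : 0 ≤ C := le_trans (abs_nonneg _) (hC 0)
  obtain ⟨M, hM0, hM⟩ := (hf_supp.isBounded).subset_closedBall_lt 0 0
  have hMIcc : tsupport f ⊆ Set.Icc (-M) M := by
    rwa [Real.closedBall_eq_Icc, zero_sub, zero_add] at hM
  have hfz : ∀ x : ℝ, x ∉ Set.Icc (-M) M → f x = 0 := by
    intro x hx
    by_contra h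
    exact hx (hMIcc (subset_tsupport f h))
  have hρ_law' : ∀ n : ℕ, (ℙ : Measure Ω).map (ρ n) =
      volume.withDensity (fun r => ENNReal.ofReal (gd n r)) := hρ_law
  -- integrability of f and x*f
  have hf_int : Integrable f (volume : Measure ℝ) := by
    apply Integrable.mono' ((integrable_indicator_iff (measurableSet_Icc (a := -M) (b := M))).2
      (integrableOn_const measure_Icc_lt_top.ne))
      hf_meas.aestronglyMeasurable
    filter_upwards with x
    by_cases hx : x ∈ Set.Icc (-M) M
    · rw [Set.indicator_of_mem hx]; exact hC x
    · rw [Set.indicator_of_notMem hx, hfz x hx]; simp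
  have hxf_int : Integrable (fun x : ℝ => x * f x) (volume : Measure ℝ) := by
    apply Integrable.mono' (f := fun x : ℝ => x * f x) ((integrable_indicator_iff (measurableSet_Icc (a := -M) (b := M))).2
      (integrableOn_const (C := M * C) measure_Icc_lt_top.ne))
      (measurable_id.mul hf_meas).aestronglyMeasurable
    filter_upwards with x
    by_cases hx : x ∈ Set.Icc (-M) M
    · rw [Set.indicator_of_mem hx]
      have h1 : |x| ≤ M := abs_le.2 ⟨hx.1, hx.2⟩
      calc ‖x * f x‖ = |x| * |f x| := abs_mul x (f x)
        _ ≤ M * C := mul_le_mul h1 (hC x) (abs_nonneg _) (le_of_lt hM0)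
    · rw [Set.indicator_of_notMem hx, hfz x hx]; simp
  -- main identity for each R > 0
  have main : ∀ R : ℝ, 0 < R →
      (∑' n : ℕ, ∫ ω, f (ρ n ω - R) ∂ℙ) =
        2 * R * (∫ x in Set.Ioi (-R), f x) + 2 * ∫ x in Set.Ioi (-R), x * f x := by
    intro R hR
    have hfm : Measurable fun r : ℝ => f (r - R) :=
      hf_meas.comp (measurable_id.sub measurable_const)
    -- step 1 : each expectation as a Lebesgue integral
    have step1 : ∀ n : ℕ, (∫ ω, f (ρ n ω - R) ∂ℙ) = ∫ r : ℝ, gd n r * f (r - R) := by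
      intro n
      rw [← integral_map (hρ_meas n).aemeasurable hfm.aestronglyMeasurable, hρ_law' n]
      have hmeas : Measurable fun r : ℝ => (gd n r).toNNReal :=
        (gd_measurable n).real_toNNReal
      have hmeq : (fun r : ℝ => ENNReal.ofReal (gd n r))
          = fun r : ℝ => (((gd n r).toNNReal : NNReal) : ENNReal) := rfl
      rw [hmeq, integral_withDensity_eq_integral_smul hmeas (fun r => f (r - R))]
      congr 1
      funext r
      rw [NNReal.smul_def, smul_eq_mul, Real.coe_toNNReal _ (gd_nonneg n r)]
    -- step 2 : swap sum and integral
    have hgm : ∀ n : ℕ, AEStronglyMeasurable (fun r : ℝ => gd n r * f (r - R)) volume :=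
      fun n => ((gd_measurable n).mul hfm).aestronglyMeasurable
    have habs : ∀ r : ℝ, (∑' n : ℕ, |gd n r * f (r - R)|)
        = Set.indicator (Set.Ici (0:ℝ)) (fun r => 2 * r) r * |f (r - R)| := by
      intro r
      have h1 : (fun n : ℕ => |gd n r * f (r - R)|) = fun n : ℕ => gd n r * |f (r - R)| := by
        funext n
        rw [abs_mul, abs_of_nonneg (gd_nonneg n r)]
      rw [h1, tsum_mul_right, gd_tsum r]
    have hbound : (∑' n : ℕ, ∫⁻ r : ℝ, ‖gd n r * f (r - R)‖₊) ≠ ⊤ := by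
      rw [← lintegral_tsum (f := fun n r => (‖gd n r * f (r - R)‖₊ : ENNReal)) (fun n => (((gd_measurable n).mul hfm).nnnorm.coe_nnreal_ennreal).aemeasurable)]
      have hpt : ∀ r : ℝ, (∑' n : ℕ, (‖gd n r * f (r - R)‖₊ : ENNReal))
          ≤ Set.indicator (Set.Icc (R - M) (R + M))
              (fun _ => ENNReal.ofReal (2 * (R + M) * C)) r := by
        intro r
        have hsummabs : Summable (fun n : ℕ => |gd n r * f (r - R)|) := by
          have h1 : (fun n : ℕ => |gd n r * f (r - R)|)
              = fun n : ℕ => gd n r * |f (r - R)| := by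
            funext n; rw [abs_mul, abs_of_nonneg (gd_nonneg n r)]
          rw [h1]; exact (gd_summable r).mul_right _
        have h2 : (∑' n : ℕ, (‖gd n r * f (r - R)‖₊ : ENNReal))
            = ENNReal.ofReal (∑' n : ℕ, |gd n r * f (r - R)|) := by
          rw [ENNReal.ofReal_tsum_of_nonneg (fun n => abs_nonneg _) hsummabs]
          congr 1
          funext n
          rw [← Real.enorm_eq_ofReal_abs]; rfl
        rw [h2]
        by_cases hr2 : r ∈ Set.Icc (R - M) (R + M)
        · rw [Set.indicator_of_mem hr2]
          apply ENNReal.ofReal_le_ofReal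
          rw [habs r]
          have h3 : Set.indicator (Set.Ici (0:ℝ)) (fun r => 2 * r) r ≤ 2 * (R + M) := by
            by_cases hr : r ∈ Set.Ici (0:ℝ)
            · rw [Set.indicator_of_mem hr]; nlinarith [hr2.2]
            · rw [Set.indicator_of_notMem hr]; nlinarith
          have h4 : 0 ≤ Set.indicator (Set.Ici (0:ℝ)) (fun r => 2 * r) r := by
            apply Set.indicator_nonneg
            intro x hx
            have : (0:ℝ) ≤ x := hx
            linarith
          exact mul_le_mul h3 (hC _) (abs_nonneg _) (by nlinarith)
        · rw [Set.indicator_of_notMem hr2]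
          have hf0 : f (r - R) = 0 := by
            apply hfz
            intro hmem
            exact hr2 ⟨by linarith [hmem.1], by linarith [hmem.2]⟩
          have : (∑' n : ℕ, |gd n r * f (r - R)|) = 0 := by
            rw [habs r, hf0, abs_zero, mul_zero]
          rw [this, ENNReal.ofReal_zero]
      apply ne_top_of_le_ne_top _ (lintegral_mono hpt)
      rw [lintegral_indicator_const measurableSet_Icc]
      exact ENNReal.mul_ne_top ENNReal.ofReal_ne_top (measure_Icc_lt_top).ne
    have step2 : (∑' n : ℕ, ∫ ω, f (ρ n ω - R) ∂ℙ)
        = ∫ r : ℝ, ∑' n : ℕ, gd n r * f (r - R) := by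
      simp only [step1]
      exact (integral_tsum hgm hbound).symm
    -- step 3 : evaluate the integral
    have hpt3 : (fun r : ℝ => ∑' n : ℕ, gd n r * f (r - R))
        = fun r : ℝ => Set.indicator (Set.Ici (0:ℝ)) (fun r => 2 * r * f (r - R)) r := by
      funext r
      rw [tsum_mul_right, gd_tsum r]
      exact (Set.indicator_mul_left (Set.Ici (0:ℝ)) (fun r => 2 * r) (fun r => f (r - R))).symm
    rw [step2, hpt3]
    have shift : (∫ r : ℝ, Set.indicator (Set.Ici (0:ℝ)) (fun r => 2 * r * f (r - R)) r)
        = ∫ x : ℝ, Set.indicator (Set.Ici (-R)) (fun x => 2 * (x + R) * f x) x := by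
      rw [← integral_add_right_eq_self
        (fun r : ℝ => Set.indicator (Set.Ici (0:ℝ)) (fun r => 2 * r * f (r - R)) r) R]
      congr 1
      funext x
      by_cases hx : (0:ℝ) ≤ x + R
      · have hxm : x + R ∈ Set.Ici (0:ℝ) := hx
        have hx' : x ∈ Set.Ici (-R) := by
          simp only [Set.mem_Ici]; linarith
        rw [Set.indicator_of_mem hxm, Set.indicator_of_mem hx']
        simp
      · have hxm : x + R ∉ Set.Ici (0:ℝ) := hx
        have hx' : x ∉ Set.Ici (-R) := by
          simp only [Set.mem_Ici]
          intro h
          exact hx (by linarith)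
        rw [Set.indicator_of_notMem hxm, Set.indicator_of_notMem hx']
    rw [shift, integral_indicator measurableSet_Ici, integral_Ici_eq_integral_Ioi]
    calc (∫ x in Set.Ioi (-R), 2 * (x + R) * f x)
        = ∫ x in Set.Ioi (-R), (2 * R * f x + 2 * (x * f x)) := by
          apply setIntegral_congr_fun measurableSet_Ioi
          intro x _; ring
      _ = (∫ x in Set.Ioi (-R), 2 * R * f x) + ∫ x in Set.Ioi (-R), 2 * (x * f x) := by
          apply integral_add
          · exact (hf_int.integrableOn.const_mul (2 * R))
          · exact (hxf_int.integrableOn.const_mul 2)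
      _ = 2 * R * (∫ x in Set.Ioi (-R), f x) + 2 * ∫ x in Set.Ioi (-R), x * f x := by
          rw [integral_const_mul, integral_const_mul]
  refine ⟨main, ?_⟩
  refine ⟨|2 * ∫ x : ℝ, x * f x| + 1, by positivity, M + 1, ?_⟩
  intro R hR
  have hR0 : 0 < R := by linarith
  rw [main R hR0]
  have h1 : (∫ x in Set.Ioi (-R), f x) = ∫ x : ℝ, f x := by
    apply setIntegral_eq_integral_of_forall_compl_eq_zero
    intro x hx
    apply hfz
    intro hmem
    simp only [Set.mem_Ioi, not_lt] at hx
    have : -M ≤ x := hmem.1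
    linarith
  have h2 : (∫ x in Set.Ioi (-R), x * f x) = ∫ x : ℝ, x * f x := by
    apply setIntegral_eq_integral_of_forall_compl_eq_zero
    intro x hx
    simp only [Set.mem_Ioi, not_lt] at hx
    have hf0 : f x = 0 := by
      apply hfz
      intro hmem
      have : -M ≤ x := hmem.1
      linarith
    rw [hf0, mul_zero]
  rw [h1, h2]
  have heq : 2 * R * (∫ x : ℝ, f x) + 2 * (∫ x : ℝ, x * f x) - 2 * R * ∫ x : ℝ, f x
      = 2 * ∫ x : ℝ, x * f x := by ring
  rw [heq]
  linarith [abs_nonneg (2 * ∫ x : ℝ, x * f x)]
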